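/- For any linear map φ : M_n → M_k, ‖φ‖_cb ≤ min{k, n^{3/2}} · ‖φ‖. -/

import Mathlib

open scoped ComplexOrder

/-- The amplification `id_m ⊗ φ` of a linear map on matrices. -/
noncomputable def ampl {n k : ℕ} (m : ℕ)
    (φ : Matrix (Fin n) (Fin n) ℂ →ₗ[ℂ] Matrix (Fin k) (Fin k) ℂ) :
    Matrix (Fin m × Fin n) (Fin m × Fin n) ℂ →ₗ[ℂ]
      Matrix (Fin m × Fin k) (Fin m × Fin k) ℂ where
  toFun M := Matrix.of fun p q => φ (Matrix.of fun a b => M (p.1, a) (q.1, b)) p.2 q.2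
  map_add' M N := by
    ext p q
    show φ (Matrix.of fun a b => (M + N) (p.1, a) (q.1, b)) p.2 q.2
        = φ (Matrix.of fun a b => M (p.1, a) (q.1, b)) p.2 q.2
          + φ (Matrix.of fun a b => N (p.1, a) (q.1, b)) p.2 q.2
    rw [show (Matrix.of fun a b => (M + N) (p.1, a) (q.1, b))
        = (Matrix.of fun a b => M (p.1, a) (q.1, b))
          + (Matrix.of fun a b => N (p.1, a) (q.1, b)) from rfl, map_add]
    simp
  map_smul' c M := by
    ext p q
    show φ (Matrix.of fun a b => (c • M) (p.1, a) (q.1, b)) p.2 q.2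
        = c • φ (Matrix.of fun a b => M (p.1, a) (q.1, b)) p.2 q.2
    rw [show (Matrix.of fun a b => (c • M) (p.1, a) (q.1, b))
        = c • (Matrix.of fun a b => M (p.1, a) (q.1, b)) from rfl, map_smul]
    simp

/-- Operator (spectral) norm of a square complex matrix. -/
noncomputable def opN {n : Type*} [Fintype n] [DecidableEq n] (X : Matrix n n ℂ) : ℝ :=
  ‖(Matrix.toEuclideanCLM (𝕜 := ℂ) X : EuclideanSpace ℂ n →L[ℂ] EuclideanSpace ℂ n)‖

/-- Induced norm (w.r.t. operator norms) of a linear map between matrix algebras. -/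
noncomputable def mapNorm {a b : Type*} [Fintype a] [DecidableEq a] [Fintype b] [DecidableEq b]
    (ψ : Matrix a a ℂ →ₗ[ℂ] Matrix b b ℂ) : ℝ :=
  sSup {r : ℝ | ∃ X : Matrix a a ℂ, opN X ≤ 1 ∧ r = opN (ψ X)}

/-- The completely bounded norm `sup_m ‖id_m ⊗ φ‖`. -/
noncomputable def cbNorm {n k : ℕ}
    (φ : Matrix (Fin n) (Fin n) ℂ →ₗ[ℂ] Matrix (Fin k) (Fin k) ℂ) : ℝ :=
  ⨆ m : ℕ, mapNorm (ampl (m + 1) φ)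

/-- The positive semidefinite square root of a positive semidefinite matrix
(the definition of `Matrix.PosSemidef.sqrt` in the older Mathlib, since removed). -/
noncomputable def Matrix.PosSemidef.sqrt {n : Type*} [Fintype n] [DecidableEq n]
    {A : Matrix n n ℂ} (hA : A.PosSemidef) : Matrix n n ℂ :=
  (hA.1.eigenvectorUnitary : Matrix n n ℂ) *
    Matrix.diagonal (fun i => ((√(hA.1.eigenvalues i) : ℝ) : ℂ)) *
  (star hA.1.eigenvectorUnitary : Matrix n n ℂ)

/-- Trace norm of a matrix: the trace of `√(XᴴX)`. -/
noncomputable def traceNorm {a b : Type*} [Fintype a] [Fintype b] [DecidableEq b]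
    (X : Matrix a b ℂ) : ℝ :=
  ((Matrix.posSemidef_conjTranspose_mul_self X).sqrt.trace).re

/-- Induced trace-norm of a linear map between matrix algebras. -/
noncomputable def tMapNorm {a b : Type*} [Fintype a] [DecidableEq a] [Fintype b] [DecidableEq b]
    (ψ : Matrix a a ℂ →ₗ[ℂ] Matrix b b ℂ) : ℝ :=
  sSup {r : ℝ | ∃ X : Matrix a a ℂ, traceNorm X ≤ 1 ∧ r = traceNorm (ψ X)}

open scoped Matrix.Norms.L2Operator ComplexConjugate

set_option linter.unusedSectionVars false

section Infra
variable {ι κ : Type*} [Fintype ι] [DecidableEq ι] [Fintype κ] [DecidableEq κ]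

noncomputable def eu (x : ι → ℂ) : EuclideanSpace ℂ ι := (WithLp.equiv 2 _).symm x

@[simp] lemma eu_apply (x : ι → ℂ) (i : ι) : eu x i = x i := rfl

lemma opN_eq_norm (X : Matrix ι ι ℂ) : opN X = ‖X‖ := rfl

lemma opN_nonneg (X : Matrix ι ι ℂ) : 0 ≤ opN X := norm_nonneg _

lemma eu_norm_sq (x : ι → ℂ) : ‖eu x‖ ^ 2 = ∑ i, ‖x i‖ ^ 2 := by
  rw [EuclideanSpace.norm_eq, Real.sq_sqrt (by positivity)]; rfl

lemma clm_apply (X : Matrix ι ι ℂ) (v : ι → ℂ) :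
    Matrix.toEuclideanCLM (𝕜 := ℂ) X (eu v) = eu (X.mulVec v) := by
  simp [eu, Matrix.toEuclideanCLM_toLp, Matrix.toLin'_apply]

noncomputable def sesq (X : Matrix ι ι ℂ) (ξ η : ι → ℂ) : ℂ :=
  ∑ i, ∑ j, conj (ξ i) * X i j * η j

lemma sesq_eq_inner (X : Matrix ι ι ℂ) (ξ η : ι → ℂ) :
    sesq X ξ η = inner (𝕜 := ℂ) (eu ξ) (Matrix.toEuclideanCLM (𝕜 := ℂ) X (eu η)) := by
  rw [clm_apply]
  simp [sesq, PiLp.inner_apply, Matrix.mulVec, dotProduct, Finset.mul_sum, mul_assoc,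
    RCLike.inner_apply]
  refine Finset.sum_congr rfl fun i _ => ?_
  rw [Finset.sum_mul]
  exact Finset.sum_congr rfl fun j _ => by ring

lemma norm_sesq_le (X : Matrix ι ι ℂ) (ξ η : ι → ℂ) :
    ‖sesq X ξ η‖ ≤ opN X * ‖eu ξ‖ * ‖eu η‖ := by
  rw [sesq_eq_inner]
  calc ‖inner (𝕜 := ℂ) (eu ξ) (Matrix.toEuclideanCLM (𝕜 := ℂ) X (eu η))‖
      ≤ ‖eu ξ‖ * ‖Matrix.toEuclideanCLM (𝕜 := ℂ) X (eu η)‖ := norm_inner_le_norm _ _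
    _ ≤ ‖eu ξ‖ * (opN X * ‖eu η‖) :=
        mul_le_mul_of_nonneg_left (ContinuousLinearMap.le_opNorm _ _) (norm_nonneg _)
    _ = opN X * ‖eu ξ‖ * ‖eu η‖ := by ring

lemma opN_le_of_sesq {X : Matrix ι ι ℂ} {c : ℝ} (hc : 0 ≤ c)
    (h : ∀ ξ η : ι → ℂ, ‖sesq X ξ η‖ ≤ c * ‖eu ξ‖ * ‖eu η‖) : opN X ≤ c := by
  refine ContinuousLinearMap.opNorm_le_bound _ hc fun v => ?_
  set T := Matrix.toEuclideanCLM (𝕜 := ℂ) X with hT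
  have hv : eu (fun i => v i) = v := rfl
  have hw : eu (fun i => T v i) = T v := rfl
  have h2 : ‖T v‖ ^ 2 ≤ c * ‖T v‖ * ‖v‖ := by
    have h3 := h (fun i => T v i) (fun i => v i)
    rw [sesq_eq_inner, hv, hw, ← hT] at h3
    rw [inner_self_eq_norm_sq_to_K (𝕜 := ℂ)] at h3
    simpa using h3
  rcases eq_or_lt_of_le (norm_nonneg (T v)) with h0 | h0
  · rw [← h0]; positivity
  · nlinarith [norm_nonneg v]
end Infra

section More
variable {ι κ : Type*} [Fintype ι] [DecidableEq ι] [Fintype κ] [DecidableEq κ]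

lemma coord_le_eu_norm (x : ι → ℂ) (i : ι) : ‖x i‖ ≤ ‖eu x‖ := by
  have h1 : ‖x i‖ ^ 2 ≤ ‖eu x‖ ^ 2 := by
    rw [eu_norm_sq]
    exact Finset.single_le_sum (f := fun j => ‖x j‖ ^ 2) (fun j _ => by positivity)
      (Finset.mem_univ i)
  have := abs_le_abs (a := ‖x i‖) (b := ‖eu x‖)
  nlinarith [norm_nonneg (eu x), norm_nonneg (x i)]

lemma eu_mulVec_le (X : Matrix ι ι ℂ) (v : ι → ℂ) :
    ‖eu (X.mulVec v)‖ ≤ opN X * ‖eu v‖ := by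
  rw [← clm_apply]
  exact ContinuousLinearMap.le_opNorm _ _

/-- Norm of an "elementary tensor" vector. -/
lemma eu_tensor_norm (f : ι → ℂ) (g : κ → ℂ) :
    ‖eu (fun pa : ι × κ => f pa.1 * g pa.2)‖ = ‖eu f‖ * ‖eu g‖ := by
  have h : ‖eu (fun pa : ι × κ => f pa.1 * g pa.2)‖ ^ 2 = (‖eu f‖ * ‖eu g‖) ^ 2 := by
    rw [eu_norm_sq, mul_pow, eu_norm_sq, eu_norm_sq, Fintype.sum_prod_type, Finset.sum_mul_sum]
    simp [norm_mul, mul_pow]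
  have h1 : (0:ℝ) ≤ ‖eu f‖ * ‖eu g‖ := by positivity
  nlinarith [norm_nonneg (eu (fun pa : ι × κ => f pa.1 * g pa.2))]

lemma opN_stdBasisMatrix (i j : ι) : opN (Matrix.single i j (1:ℂ)) ≤ 1 := by
  refine opN_le_of_sesq zero_le_one fun ξ η => ?_
  have h : sesq (Matrix.single i j (1:ℂ)) ξ η = conj (ξ i) * η j := by
    unfold sesq
    rw [Finset.sum_eq_single i]
    · rw [Finset.sum_eq_single j]
      · simp [Matrix.single]
      · intro c _ hc; simp [Matrix.single, Matrix.of_apply, hc.symm]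
      · simp
    · intro b _ hb
      refine Finset.sum_eq_zero fun c _ => ?_
      simp [Matrix.single, Matrix.of_apply, Ne.symm hb]
    · simp
  rw [h, one_mul, norm_mul, RCLike.norm_conj]
  exact mul_le_mul (coord_le_eu_norm ξ i) (coord_le_eu_norm η j) (norm_nonneg _) (norm_nonneg _)

end More

section MapNorm
variable {a b : Type*} [Fintype a] [DecidableEq a] [Fintype b] [DecidableEq b]
variable (ψ : Matrix a a ℂ →ₗ[ℂ] Matrix b b ℂ)

lemma mapNorm_bddAbove : BddAbove {r : ℝ | ∃ X : Matrix a a ℂ, opN X ≤ 1 ∧ r = opN (ψ X)} := by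
  have hn : (0:ℝ) ≤ ‖LinearMap.toContinuousLinearMap ψ‖ := ContinuousLinearMap.opNorm_nonneg _
  refine ⟨‖LinearMap.toContinuousLinearMap ψ‖, ?_⟩
  rintro r ⟨X, hX, rfl⟩
  calc opN (ψ X) = ‖LinearMap.toContinuousLinearMap ψ X‖ := rfl
    _ ≤ ‖LinearMap.toContinuousLinearMap ψ‖ * ‖X‖ := ContinuousLinearMap.le_opNorm _ _
    _ ≤ ‖LinearMap.toContinuousLinearMap ψ‖ * 1 := mul_le_mul_of_nonneg_left hX hn
    _ = _ := mul_one _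

lemma zero_mem_mapNorm_set :
    (0:ℝ) ∈ {r : ℝ | ∃ X : Matrix a a ℂ, opN X ≤ 1 ∧ r = opN (ψ X)} := by
  refine ⟨0, ?_, ?_⟩
  · rw [opN_eq_norm, norm_zero]; exact zero_le_one
  · rw [map_zero, opN_eq_norm, norm_zero]

lemma mapNorm_nonneg : 0 ≤ mapNorm ψ :=
  le_csSup (mapNorm_bddAbove ψ) (zero_mem_mapNorm_set ψ)

lemma opN_map_le (X : Matrix a a ℂ) : opN (ψ X) ≤ mapNorm ψ * opN X := by
  rcases eq_or_ne (opN X) 0 with h0 | h0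
  · rw [opN_eq_norm, norm_eq_zero] at h0
    subst h0
    rw [map_zero]
    simp only [opN_eq_norm, norm_zero, mul_zero]
    exact le_refl 0
  · have hpos : 0 < opN X := lt_of_le_of_ne (opN_nonneg X) (Ne.symm h0)
    have hcn : ‖((opN X : ℂ))⁻¹‖ = (opN X)⁻¹ := by
      rw [norm_inv, Complex.norm_real, Real.norm_eq_abs, abs_of_pos hpos]
    have key : opN (ψ (((opN X : ℂ))⁻¹ • X)) ≤ mapNorm ψ := by
      refine le_csSup (mapNorm_bddAbove ψ) ⟨((opN X : ℂ))⁻¹ • X, ?_, rfl⟩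
      rw [opN_eq_norm, norm_smul, hcn, ← opN_eq_norm, inv_mul_cancel₀ h0]
    rw [map_smul] at key
    have heq : opN (((opN X : ℂ))⁻¹ • ψ X) = (opN X)⁻¹ * opN (ψ X) := by
      rw [opN_eq_norm, norm_smul, hcn]; rfl
    rw [heq] at key
    calc opN (ψ X) = opN X * ((opN X)⁻¹ * opN (ψ X)) := by field_simp
      _ ≤ opN X * mapNorm ψ := mul_le_mul_of_nonneg_left key hpos.le
      _ = mapNorm ψ * opN X := mul_comm _ _

end MapNorm

section Core
variable {ι κ : Type*} [Fintype ι] [DecidableEq ι] [Fintype κ] [DecidableEq κ]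

lemma entry_le_opN (X : Matrix ι ι ℂ) (i j : ι) : ‖X i j‖ ≤ opN X := by
  have h : sesq X (Pi.single i 1) (Pi.single j 1) = X i j := by
    unfold sesq
    rw [Finset.sum_eq_single i]
    · rw [Finset.sum_eq_single j]
      · simp
      · intro c _ hc; simp [Pi.single_apply, hc]
      · simp
    · intro b _ hb
      refine Finset.sum_eq_zero fun c _ => ?_
      simp [Pi.single_apply, hb]
    · simp
  have h2 := norm_sesq_le X (Pi.single i 1) (Pi.single j 1)
  rw [h] at h2
  have e1 : eu (Pi.single i (1:ℂ)) = EuclideanSpace.single i (1:ℂ) := rfl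
  have e2 : eu (Pi.single j (1:ℂ)) = EuclideanSpace.single j (1:ℂ) := rfl
  rw [e1, e2, EuclideanSpace.norm_single, EuclideanSpace.norm_single, norm_one,
    mul_one, mul_one] at h2
  exact h2

/-- Compression of `M` by vectors `x, y`. -/
lemma opN_compress {m : ℕ} (M : Matrix (Fin m × ι) (Fin m × ι) ℂ) (x y : Fin m → ℂ) :
    opN (∑ p, ∑ q, (conj (x p) * y q) • Matrix.of (fun a b => M (p, a) (q, b))) ≤
      opN M * ‖eu x‖ * ‖eu y‖ := by
  have hc : (0:ℝ) ≤ opN M * ‖eu x‖ * ‖eu y‖ := by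
    have := opN_nonneg M; positivity
  refine opN_le_of_sesq hc fun u v => ?_
  have key : sesq (∑ p, ∑ q, (conj (x p) * y q) • Matrix.of (fun a b => M (p, a) (q, b))) u v
      = sesq M (fun pa => x pa.1 * u pa.2) (fun qb => y qb.1 * v qb.2) := by
    unfold sesq
    simp only [Matrix.sum_apply, Matrix.smul_apply, Matrix.of_apply, smul_eq_mul,
      Finset.mul_sum, Finset.sum_mul, Fintype.sum_prod_type]
    calc ∑ a, ∑ b, ∑ p, ∑ q, conj (u a) * ((conj (x p) * y q) * M (p, a) (q, b)) * v b
        = ∑ a, ∑ p, ∑ b, ∑ q, conj (u a) * ((conj (x p) * y q) * M (p, a) (q, b)) * v b :=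
          Finset.sum_congr rfl fun a _ => Finset.sum_comm
      _ = ∑ p, ∑ a, ∑ b, ∑ q, conj (u a) * ((conj (x p) * y q) * M (p, a) (q, b)) * v b :=
          Finset.sum_comm
      _ = ∑ p, ∑ a, ∑ q, ∑ b, conj (x p * u a) * M (p, a) (q, b) * (y q * v b) := by
          refine Finset.sum_congr rfl fun p _ => Finset.sum_congr rfl fun a _ => ?_
          rw [Finset.sum_comm]
          refine Finset.sum_congr rfl fun q _ => Finset.sum_congr rfl fun b _ => ?_
          simp only [map_mul]
          ring
  rw [key]
  calc ‖sesq M (fun pa => x pa.1 * u pa.2) (fun qb => y qb.1 * v qb.2)‖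
      ≤ opN M * ‖eu (fun pa : Fin m × ι => x pa.1 * u pa.2)‖ *
        ‖eu (fun qb : Fin m × ι => y qb.1 * v qb.2)‖ := norm_sesq_le _ _ _
    _ = opN M * ‖eu x‖ * ‖eu y‖ * ‖eu u‖ * ‖eu v‖ := by
        rw [eu_tensor_norm, eu_tensor_norm]; ring
    _ = opN M * ‖eu x‖ * ‖eu y‖ * ‖eu u‖ * ‖eu v‖ := rfl
end Core

lemma sum_le_sqrt_card_mul {k : ℕ} (g : Fin k → ℝ) (hg : ∀ l, 0 ≤ g l) :
    ∑ l, g l ≤ Real.sqrt k * Real.sqrt (∑ l, g l ^ 2) := by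
  have h := Finset.sum_mul_sq_le_sq_mul_sq Finset.univ (fun _ : Fin k => (1:ℝ)) g
  simp only [one_mul, one_pow, Finset.sum_const, Finset.card_univ, Fintype.card_fin,
    nsmul_eq_mul, mul_one] at h
  have h1 : (0:ℝ) ≤ ∑ l, g l := Finset.sum_nonneg fun l _ => hg l
  have h2 : Real.sqrt k * Real.sqrt (∑ l, g l ^ 2) =
      Real.sqrt ((k : ℝ) * ∑ l, g l ^ 2) := (Real.sqrt_mul (Nat.cast_nonneg k) _).symm
  rw [h2]
  have h3 := Real.sq_sqrt (by positivity : (0:ℝ) ≤ (k : ℝ) * ∑ l, g l ^ 2)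
  nlinarith [Real.sqrt_nonneg ((k : ℝ) * ∑ l, g l ^ 2)]

lemma sum_slice_norm_sq {m k : ℕ} (ξ : Fin m × Fin k → ℂ) :
    ∑ l, ‖eu (fun p => ξ (p, l))‖ ^ 2 = ‖eu ξ‖ ^ 2 := by
  simp only [eu_norm_sq]
  rw [Fintype.sum_prod_type]
  exact Finset.sum_comm

section KBound
variable {n k : ℕ} (φ : Matrix (Fin n) (Fin n) ℂ →ₗ[ℂ] Matrix (Fin k) (Fin k) ℂ) {m : ℕ}

lemma kbound (M : Matrix (Fin m × Fin n) (Fin m × Fin n) ℂ) (hM : opN M ≤ 1) :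
    opN (ampl m φ M) ≤ (k : ℝ) * mapNorm φ := by
  have hmn : 0 ≤ mapNorm φ := mapNorm_nonneg φ
  refine opN_le_of_sesq (by positivity) fun ξ η => ?_
  set N : Fin k → Fin k → Matrix (Fin n) (Fin n) ℂ := fun l l' =>
    ∑ p, ∑ q, (conj (ξ (p, l)) * η (q, l')) • Matrix.of (fun a b => M (p, a) (q, b)) with hNdef
  have stepA : sesq (ampl m φ M) ξ η = ∑ l, ∑ l', φ (N l l') l l' := by
    have hN : ∀ l l', φ (N l l') l l'
        = ∑ p, ∑ q, (conj (ξ (p, l)) * η (q, l')) *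
            φ (Matrix.of (fun a b => M (p, a) (q, b))) l l' := by
      intro l l'
      rw [hNdef]
      simp only [map_sum, map_smul, Matrix.sum_apply, Matrix.smul_apply, smul_eq_mul]
    simp only [hN]
    unfold sesq
    rw [Fintype.sum_prod_type]
    have happ : ∀ (p : Fin m) (l : Fin k) (ql' : Fin m × Fin k),
        (ampl m φ M) (p, l) ql' = φ (Matrix.of fun a b => M (p, a) (ql'.1, b)) l ql'.2 :=
      fun _ _ _ => rfl
    calc ∑ p, ∑ l, ∑ ql' : Fin m × Fin k,
            conj (ξ (p, l)) * (ampl m φ M) (p, l) ql' * η ql'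
        = ∑ p, ∑ l, ∑ q, ∑ l', conj (ξ (p, l)) *
            φ (Matrix.of fun a b => M (p, a) (q, b)) l l' * η (q, l') := by
          refine Finset.sum_congr rfl fun p _ => Finset.sum_congr rfl fun l _ => ?_
          rw [Fintype.sum_prod_type]
          exact Finset.sum_congr rfl fun q _ => Finset.sum_congr rfl fun l' _ => by
            rw [happ]
      _ = ∑ l, ∑ p, ∑ q, ∑ l', conj (ξ (p, l)) *
            φ (Matrix.of fun a b => M (p, a) (q, b)) l l' * η (q, l') := Finset.sum_comm
      _ = ∑ l, ∑ p, ∑ l', ∑ q, conj (ξ (p, l)) *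
            φ (Matrix.of fun a b => M (p, a) (q, b)) l l' * η (q, l') :=
          Finset.sum_congr rfl fun l _ => Finset.sum_congr rfl fun p _ => Finset.sum_comm
      _ = ∑ l, ∑ l', ∑ p, ∑ q, conj (ξ (p, l)) *
            φ (Matrix.of fun a b => M (p, a) (q, b)) l l' * η (q, l') :=
          Finset.sum_congr rfl fun l _ => Finset.sum_comm
      _ = ∑ l, ∑ l', ∑ p, ∑ q, (conj (ξ (p, l)) * η (q, l')) *
            φ (Matrix.of fun a b => M (p, a) (q, b)) l l' := by
          refine Finset.sum_congr rfl fun l _ => Finset.sum_congr rfl fun l' _ =>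
            Finset.sum_congr rfl fun p _ => Finset.sum_congr rfl fun q _ => by ring
  rw [stepA]
  have stepB : ∀ l l', ‖φ (N l l') l l'‖ ≤
      mapNorm φ * (‖eu (fun p => ξ (p, l))‖ * ‖eu (fun q => η (q, l'))‖) := by
    intro l l'
    calc ‖φ (N l l') l l'‖ ≤ opN (φ (N l l')) := entry_le_opN _ _ _
      _ ≤ mapNorm φ * opN (N l l') := opN_map_le φ _
      _ ≤ mapNorm φ * (‖eu (fun p => ξ (p, l))‖ * ‖eu (fun q => η (q, l'))‖) := by
          refine mul_le_mul_of_nonneg_left ?_ hmn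
          calc opN (N l l') ≤ opN M * ‖eu (fun p => ξ (p, l))‖ * ‖eu (fun q => η (q, l'))‖ :=
                opN_compress M _ _
            _ ≤ 1 * ‖eu (fun p => ξ (p, l))‖ * ‖eu (fun q => η (q, l'))‖ := by
                refine mul_le_mul_of_nonneg_right (mul_le_mul_of_nonneg_right hM ?_) ?_ <;>
                  exact norm_nonneg _
            _ = ‖eu (fun p => ξ (p, l))‖ * ‖eu (fun q => η (q, l'))‖ := by ring
  calc ‖∑ l, ∑ l', φ (N l l') l l'‖
      ≤ ∑ l, ∑ l', ‖φ (N l l') l l'‖ := by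
        refine le_trans (norm_sum_le _ _) (Finset.sum_le_sum fun l _ => norm_sum_le _ _)
    _ ≤ ∑ l, ∑ l', mapNorm φ * (‖eu (fun p => ξ (p, l))‖ * ‖eu (fun q => η (q, l'))‖) :=
        Finset.sum_le_sum fun l _ => Finset.sum_le_sum fun l' _ => stepB l l'
    _ = mapNorm φ * ((∑ l, ‖eu (fun p => ξ (p, l))‖) * (∑ l', ‖eu (fun q => η (q, l'))‖)) := by
        rw [Finset.sum_mul_sum]
        simp only [Finset.mul_sum]
    _ ≤ mapNorm φ * ((Real.sqrt k * ‖eu ξ‖) * (Real.sqrt k * ‖eu η‖)) := by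
        refine mul_le_mul_of_nonneg_left ?_ hmn
        have hx : ∑ l, ‖eu (fun p => ξ (p, l))‖ ≤ Real.sqrt k * ‖eu ξ‖ := by
          have := sum_le_sqrt_card_mul (fun l => ‖eu (fun p => ξ (p, l))‖)
            (fun l => norm_nonneg _)
          rwa [sum_slice_norm_sq, Real.sqrt_sq (norm_nonneg _)] at this
        have hy : ∑ l', ‖eu (fun q => η (q, l'))‖ ≤ Real.sqrt k * ‖eu η‖ := by
          have := sum_le_sqrt_card_mul (fun l => ‖eu (fun q => η (q, l))‖)
            (fun l => norm_nonneg _)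
          rwa [sum_slice_norm_sq, Real.sqrt_sq (norm_nonneg _)] at this
        have h1 : (0:ℝ) ≤ ∑ l, ‖eu (fun p => ξ (p, l))‖ :=
          Finset.sum_nonneg fun l _ => norm_nonneg _
        have h2 : (0:ℝ) ≤ Real.sqrt k * ‖eu ξ‖ := by positivity
        exact mul_le_mul hx hy (Finset.sum_nonneg fun l _ => norm_nonneg _) h2
    _ = (Real.sqrt k * Real.sqrt k) * mapNorm φ * ‖eu ξ‖ * ‖eu η‖ := by ring
    _ = (k : ℝ) * mapNorm φ * ‖eu ξ‖ * ‖eu η‖ := by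
        rw [Real.mul_self_sqrt (Nat.cast_nonneg k)]

end KBound

lemma cs_sum {ι : Type*} [Fintype ι] (a b : ι → ℝ) (ha : ∀ i, 0 ≤ a i) (hb : ∀ i, 0 ≤ b i) :
    ∑ i, a i * b i ≤ Real.sqrt (∑ i, a i ^ 2) * Real.sqrt (∑ i, b i ^ 2) := by
  have h := Finset.sum_mul_sq_le_sq_mul_sq Finset.univ a b
  have h1 : (0:ℝ) ≤ ∑ i, a i * b i := Finset.sum_nonneg fun i _ => mul_nonneg (ha i) (hb i)
  have h2 : Real.sqrt (∑ i, a i ^ 2) * Real.sqrt (∑ i, b i ^ 2)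
      = Real.sqrt ((∑ i, a i ^ 2) * ∑ i, b i ^ 2) := by
    rw [Real.sqrt_mul (Finset.sum_nonneg fun i _ => sq_nonneg _)]
  rw [h2]
  have h3 := Real.sq_sqrt (mul_nonneg (Finset.sum_nonneg fun (i:ι) (_ : i ∈ Finset.univ) =>
    sq_nonneg (a i)) (Finset.sum_nonneg fun (i:ι) (_ : i ∈ Finset.univ) => sq_nonneg (b i)))
  nlinarith [Real.sqrt_nonneg ((∑ i, a i ^ 2) * ∑ i, b i ^ 2)]

section NBound
variable {n k : ℕ} (φ : Matrix (Fin n) (Fin n) ℂ →ₗ[ℂ] Matrix (Fin k) (Fin k) ℂ) {m : ℕ}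

set_option maxHeartbeats 2000000 in
lemma nbound (M : Matrix (Fin m × Fin n) (Fin m × Fin n) ℂ) (hM : opN M ≤ 1) :
    opN (ampl m φ M) ≤ (n : ℝ) * Real.sqrt n * mapNorm φ := by
  have hmn : 0 ≤ mapNorm φ := mapNorm_nonneg φ
  refine opN_le_of_sesq (by positivity) fun ξ η => ?_
  set T : Fin n → Fin n → Matrix (Fin k) (Fin k) ℂ :=
    fun c b => φ (Matrix.single c b (1:ℂ)) with hT
  have hTop : ∀ c b, opN (T c b) ≤ mapNorm φ := by
    intro c b
    calc opN (T c b) ≤ mapNorm φ * opN (Matrix.single c b (1:ℂ)) := opN_map_le φ _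
      _ ≤ mapNorm φ * 1 := mul_le_mul_of_nonneg_left (opN_stdBasisMatrix c b) hmn
      _ = mapNorm φ := mul_one _
  set Y : Fin n → Fin k → (Fin m × Fin n → ℂ) :=
    fun c l pa => if pa.2 = c then ξ (pa.1, l) else 0 with hY
  set Z : Fin n → Fin k → (Fin m × Fin n → ℂ) :=
    fun c l qb => ∑ l', T c qb.2 l l' * η (qb.1, l') with hZ
  set G : Fin n → Fin k → Fin m → Fin m → Fin k → Fin n → ℂ :=
    fun c l p q l' b => conj (ξ (p, l)) * M (p, c) (q, b) * (T c b l l' * η (q, l')) with hG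
  -- Step A: the sesquilinear form decomposes
  have stepA : sesq (ampl m φ M) ξ η = ∑ c, ∑ l, sesq M (Y c l) (Z c l) := by
    have hblk : ∀ p q : Fin m, Matrix.of (fun a b => M (p, a) (q, b))
        = ∑ a, ∑ b, M (p, a) (q, b) • Matrix.single a b (1:ℂ) := by
      intro p q
      ext a' b'
      simp only [Matrix.sum_apply, Matrix.smul_apply, Matrix.single, Matrix.of_apply,
        smul_eq_mul]
      rw [Finset.sum_eq_single a']
      · rw [Finset.sum_eq_single b']
        · simp
        · intro c _ hc
          rw [if_neg (by tauto), mul_zero]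
        · simp
      · intro a _ ha
        refine Finset.sum_eq_zero fun b _ => ?_
        rw [if_neg (by tauto), mul_zero]
      · simp
    have hφblk : ∀ (p q : Fin m) (l l' : Fin k),
        φ (Matrix.of (fun a b => M (p, a) (q, b))) l l'
          = ∑ a, ∑ b, M (p, a) (q, b) * T a b l l' := by
      intro p q l l'
      rw [hblk p q]
      simp only [map_sum, map_smul, Matrix.sum_apply, Matrix.smul_apply, smul_eq_mul, hT]
    -- LHS into canonical form
    have lhs_eq : sesq (ampl m φ M) ξ η = ∑ c, ∑ l, ∑ p, ∑ q, ∑ l', ∑ b, G c l p q l' b := by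
      unfold sesq
      rw [Fintype.sum_prod_type]
      calc ∑ p, ∑ l, ∑ ql' : Fin m × Fin k,
              conj (ξ (p, l)) * (ampl m φ M) (p, l) ql' * η ql'
          = ∑ p, ∑ l, ∑ q, ∑ l',
              conj (ξ (p, l)) * (∑ a, ∑ b, M (p, a) (q, b) * T a b l l') * η (q, l') := by
            refine Finset.sum_congr rfl fun p _ => Finset.sum_congr rfl fun l _ => ?_
            rw [Fintype.sum_prod_type]
            refine Finset.sum_congr rfl fun q _ => Finset.sum_congr rfl fun l' _ => ?_
            rw [show (ampl m φ M) (p, l) (q, l')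
              = φ (Matrix.of fun a b => M (p, a) (q, b)) l l' from rfl, hφblk]
        _ = ∑ p, ∑ l, ∑ q, ∑ l', ∑ a, ∑ b, G a l p q l' b := by
            refine Finset.sum_congr rfl fun p _ => Finset.sum_congr rfl fun l _ =>
              Finset.sum_congr rfl fun q _ => Finset.sum_congr rfl fun l' _ => ?_
            simp only [Finset.sum_mul, Finset.mul_sum, hG]
            refine Finset.sum_congr rfl fun a _ => Finset.sum_congr rfl fun b _ => by ring
        _ = ∑ p, ∑ l, ∑ q, ∑ a, ∑ l', ∑ b, G a l p q l' b :=
            Finset.sum_congr rfl fun p _ => Finset.sum_congr rfl fun l _ =>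
              Finset.sum_congr rfl fun q _ => Finset.sum_comm
        _ = ∑ p, ∑ l, ∑ a, ∑ q, ∑ l', ∑ b, G a l p q l' b :=
            Finset.sum_congr rfl fun p _ => Finset.sum_congr rfl fun l _ => Finset.sum_comm
        _ = ∑ p, ∑ a, ∑ l, ∑ q, ∑ l', ∑ b, G a l p q l' b :=
            Finset.sum_congr rfl fun p _ => Finset.sum_comm
        _ = ∑ a, ∑ p, ∑ l, ∑ q, ∑ l', ∑ b, G a l p q l' b := Finset.sum_comm
        _ = ∑ a, ∑ l, ∑ p, ∑ q, ∑ l', ∑ b, G a l p q l' b :=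
            Finset.sum_congr rfl fun a _ => Finset.sum_comm
    -- RHS into canonical form
    have rhs_eq : ∀ c l, sesq M (Y c l) (Z c l) = ∑ p, ∑ q, ∑ l', ∑ b, G c l p q l' b := by
      intro c l
      unfold sesq
      rw [Fintype.sum_prod_type]
      calc ∑ p, ∑ a, ∑ qb : Fin m × Fin n, conj (Y c l (p, a)) * M (p, a) qb * Z c l qb
          = ∑ p, ∑ q, ∑ b, conj (ξ (p, l)) * M (p, c) (q, b) * Z c l (q, b) := by
            refine Finset.sum_congr rfl fun p _ => ?_
            rw [Finset.sum_eq_single c]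
            · rw [Fintype.sum_prod_type]
              refine Finset.sum_congr rfl fun q _ => Finset.sum_congr rfl fun b _ => by
                simp [hY]
            · intro a _ ha
              refine Finset.sum_eq_zero fun qb _ => ?_
              simp [hY, ha]
            · simp
        _ = ∑ p, ∑ q, ∑ b, ∑ l', G c l p q l' b := by
            refine Finset.sum_congr rfl fun p _ => Finset.sum_congr rfl fun q _ =>
              Finset.sum_congr rfl fun b _ => ?_
            simp only [hZ, Finset.mul_sum, hG]
        _ = ∑ p, ∑ q, ∑ l', ∑ b, G c l p q l' b :=
            Finset.sum_congr rfl fun p _ => Finset.sum_congr rfl fun q _ => Finset.sum_comm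
    rw [lhs_eq]
    exact Finset.sum_congr rfl fun c _ => Finset.sum_congr rfl fun l _ => (rhs_eq c l).symm
  rw [stepA]
  have hYsq : ∀ c l, ‖eu (Y c l)‖ ^ 2 = ∑ p, ‖ξ (p, l)‖ ^ 2 := by
    intro c l
    rw [eu_norm_sq, Fintype.sum_prod_type]
    refine Finset.sum_congr rfl fun p _ => ?_
    rw [Finset.sum_eq_single c]
    · simp [hY]
    · intro a _ ha; simp [hY, ha]
    · simp
  have hSY : ∑ cl : Fin n × Fin k, ‖eu (Y cl.1 cl.2)‖ ^ 2 = (n:ℝ) * ‖eu ξ‖ ^ 2 := by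
    rw [Fintype.sum_prod_type]
    calc ∑ c, ∑ l, ‖eu (Y c l)‖ ^ 2 = ∑ _c : Fin n, ∑ l, ∑ p, ‖ξ (p, l)‖ ^ 2 :=
          Finset.sum_congr rfl fun c _ => Finset.sum_congr rfl fun l _ => hYsq c l
      _ = ∑ _c : Fin n, ‖eu ξ‖ ^ 2 := by
          refine Finset.sum_congr rfl fun c _ => ?_
          rw [eu_norm_sq, Fintype.sum_prod_type]
          exact Finset.sum_comm
      _ = (n:ℝ) * ‖eu ξ‖ ^ 2 := by
          rw [Finset.sum_const, Finset.card_univ, Fintype.card_fin, nsmul_eq_mul]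
  have hZmv : ∀ c l (q : Fin m) (b : Fin n),
      Z c l (q, b) = ((T c b).mulVec (fun l'' => η (q, l''))) l := by
    intro c l q b
    simp [hZ, Matrix.mulVec, dotProduct]
  have hSZ : ∑ cl : Fin n × Fin k, ‖eu (Z cl.1 cl.2)‖ ^ 2
      ≤ ((n:ℝ) * mapNorm φ * ‖eu η‖) ^ 2 := by
    have hslice : ∀ q : Fin m, True := fun _ => trivial
    calc ∑ cl : Fin n × Fin k, ‖eu (Z cl.1 cl.2)‖ ^ 2
        = ∑ c, ∑ l, ∑ q, ∑ b, ‖Z c l (q, b)‖ ^ 2 := by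
          rw [Fintype.sum_prod_type]
          refine Finset.sum_congr rfl fun c _ => Finset.sum_congr rfl fun l _ => ?_
          rw [eu_norm_sq, Fintype.sum_prod_type]
      _ = ∑ c, ∑ b, ∑ q, ∑ l, ‖Z c l (q, b)‖ ^ 2 := by
          refine Finset.sum_congr rfl fun c _ => ?_
          calc ∑ l, ∑ q, ∑ b, ‖Z c l (q, b)‖ ^ 2
              = ∑ l, ∑ b, ∑ q, ‖Z c l (q, b)‖ ^ 2 :=
                Finset.sum_congr rfl fun l _ => Finset.sum_comm
            _ = ∑ b, ∑ l, ∑ q, ‖Z c l (q, b)‖ ^ 2 := Finset.sum_comm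
            _ = ∑ b, ∑ q, ∑ l, ‖Z c l (q, b)‖ ^ 2 :=
                Finset.sum_congr rfl fun b _ => Finset.sum_comm
      _ = ∑ c, ∑ b, ∑ q, ‖eu ((T c b).mulVec (fun l'' => η (q, l'')))‖ ^ 2 := by
          refine Finset.sum_congr rfl fun c _ => Finset.sum_congr rfl fun b _ =>
            Finset.sum_congr rfl fun q _ => ?_
          rw [eu_norm_sq]
          exact Finset.sum_congr rfl fun l _ => by rw [hZmv]
      _ ≤ ∑ c : Fin n, ∑ b : Fin n, ∑ q,
            (mapNorm φ) ^ 2 * ‖eu (fun l'' => η (q, l''))‖ ^ 2 := by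
          refine Finset.sum_le_sum fun c _ => Finset.sum_le_sum fun b _ =>
            Finset.sum_le_sum fun q _ => ?_
          have h1 : ‖eu ((T c b).mulVec (fun l'' => η (q, l'')))‖
              ≤ mapNorm φ * ‖eu (fun l'' => η (q, l''))‖ := by
            refine le_trans (eu_mulVec_le _ _) ?_
            exact mul_le_mul_of_nonneg_right (hTop c b) (norm_nonneg _)
          calc ‖eu ((T c b).mulVec (fun l'' => η (q, l'')))‖ ^ 2
              ≤ (mapNorm φ * ‖eu (fun l'' => η (q, l''))‖) ^ 2 := by
                have := norm_nonneg (eu ((T c b).mulVec (fun l'' => η (q, l''))))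
                nlinarith
            _ = (mapNorm φ) ^ 2 * ‖eu (fun l'' => η (q, l''))‖ ^ 2 := by ring
      _ = ((n:ℝ) * mapNorm φ * ‖eu η‖) ^ 2 := by
          have hq : ∑ q : Fin m, ‖eu (fun l'' => η (q, l''))‖ ^ 2 = ‖eu η‖ ^ 2 := by
            simp only [eu_norm_sq]
            exact (Fintype.sum_prod_type (fun qi : Fin m × Fin k => ‖η qi‖ ^ 2)).symm
          rw [Finset.sum_congr rfl fun c (_ : c ∈ Finset.univ) =>
            Finset.sum_congr rfl fun b (_ : b ∈ Finset.univ) =>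
              (Finset.mul_sum Finset.univ (fun q => ‖eu (fun l'' => η (q, l''))‖ ^ 2)
                ((mapNorm φ) ^ 2)).symm]
          simp only [hq, Finset.sum_const, Finset.card_univ, Fintype.card_fin, nsmul_eq_mul]
          ring
  have hYnn : ∀ cl : Fin n × Fin k, (0:ℝ) ≤ ‖eu (Y cl.1 cl.2)‖ := fun _ => norm_nonneg _
  have hZnn : ∀ cl : Fin n × Fin k, (0:ℝ) ≤ ‖eu (Z cl.1 cl.2)‖ := fun _ => norm_nonneg _
  calc ‖∑ c, ∑ l, sesq M (Y c l) (Z c l)‖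
      ≤ ∑ c, ∑ l, ‖sesq M (Y c l) (Z c l)‖ :=
        le_trans (norm_sum_le _ _) (Finset.sum_le_sum fun c _ => norm_sum_le _ _)
    _ ≤ ∑ c, ∑ l, ‖eu (Y c l)‖ * ‖eu (Z c l)‖ := by
        refine Finset.sum_le_sum fun c _ => Finset.sum_le_sum fun l _ => ?_
        refine le_trans (norm_sesq_le M (Y c l) (Z c l)) ?_
        calc opN M * ‖eu (Y c l)‖ * ‖eu (Z c l)‖
            ≤ 1 * ‖eu (Y c l)‖ * ‖eu (Z c l)‖ := by
              refine mul_le_mul_of_nonneg_right (mul_le_mul_of_nonneg_right hM ?_) ?_ <;>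
                exact norm_nonneg _
          _ = ‖eu (Y c l)‖ * ‖eu (Z c l)‖ := by ring
    _ = ∑ cl : Fin n × Fin k, ‖eu (Y cl.1 cl.2)‖ * ‖eu (Z cl.1 cl.2)‖ := by
        exact (Fintype.sum_prod_type
          (fun cl : Fin n × Fin k => ‖eu (Y cl.1 cl.2)‖ * ‖eu (Z cl.1 cl.2)‖)).symm
    _ ≤ Real.sqrt (∑ cl : Fin n × Fin k, ‖eu (Y cl.1 cl.2)‖ ^ 2) *
          Real.sqrt (∑ cl : Fin n × Fin k, ‖eu (Z cl.1 cl.2)‖ ^ 2) :=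
        cs_sum _ _ hYnn hZnn
    _ ≤ Real.sqrt ((n:ℝ) * ‖eu ξ‖ ^ 2) * Real.sqrt (((n:ℝ) * mapNorm φ * ‖eu η‖) ^ 2) := by
        rw [hSY]
        exact mul_le_mul_of_nonneg_left (Real.sqrt_le_sqrt hSZ) (Real.sqrt_nonneg _)
    _ = (Real.sqrt n * ‖eu ξ‖) * ((n:ℝ) * mapNorm φ * ‖eu η‖) := by
        rw [Real.sqrt_mul (Nat.cast_nonneg n), Real.sqrt_sq (norm_nonneg _),
          Real.sqrt_sq (by positivity)]
    _ = (n:ℝ) * Real.sqrt n * mapNorm φ * ‖eu ξ‖ * ‖eu η‖ := by ring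

end NBound


/-- `‖φ‖_cb ≤ min {k, n^(3/2)} ⬝ ‖φ‖` for `φ : M_n → M_k`. -/
theorem cbNorm_le_min_mul_mapNorm {n k : ℕ}
    (φ : Matrix (Fin n) (Fin n) ℂ →ₗ[ℂ] Matrix (Fin k) (Fin k) ℂ) :
    cbNorm φ ≤ min (k : ℝ) ((n : ℝ) ^ ((3 : ℝ) / 2)) * mapNorm φ := by
  have hmn : 0 ≤ mapNorm φ := mapNorm_nonneg φ
  have h32 : ((n : ℝ)) ^ ((3 : ℝ) / 2) = (n : ℝ) * Real.sqrt n := by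
    have h1 : (n : ℝ) * Real.sqrt n = Real.sqrt ((n : ℝ) ^ 3) := by
      rw [show ((n : ℝ)) ^ 3 = ((n : ℝ)) ^ 2 * n by ring,
        Real.sqrt_mul (by positivity), Real.sqrt_sq (by positivity)]
    rw [h1, Real.sqrt_eq_rpow, ← Real.rpow_natCast (n : ℝ) 3,
      ← Real.rpow_mul (Nat.cast_nonneg n)]
    norm_num
  have hB32 : (0:ℝ) ≤ (n : ℝ) ^ ((3 : ℝ) / 2) := by
    rw [h32]; positivity
  have hB : (0:ℝ) ≤ min (k : ℝ) ((n : ℝ) ^ ((3 : ℝ) / 2)) * mapNorm φ := by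
    refine mul_nonneg (le_min (Nat.cast_nonneg k) hB32) hmn
  refine Real.iSup_le (fun m => ?_) hB
  refine Real.sSup_le ?_ hB
  rintro r ⟨M, hM1, rfl⟩
  have h1 : opN ((ampl (m + 1) φ) M) ≤ (k : ℝ) * mapNorm φ := kbound φ M hM1
  have h2 : opN ((ampl (m + 1) φ) M) ≤ ((n : ℝ) ^ ((3 : ℝ) / 2)) * mapNorm φ := by
    rw [h32]; exact nbound φ M hM1
  have hmin : min (k : ℝ) ((n : ℝ) ^ ((3 : ℝ) / 2)) * mapNorm φ
      = min ((k : ℝ) * mapNorm φ) (((n : ℝ) ^ ((3 : ℝ) / 2)) * mapNorm φ) := by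
    rcases le_total ((k : ℝ)) ((n : ℝ) ^ ((3 : ℝ) / 2)) with h | h
    · rw [min_eq_left h, min_eq_left (mul_le_mul_of_nonneg_right h hmn)]
    · rw [min_eq_right h, min_eq_right (mul_le_mul_of_nonneg_right h hmn)]
  rw [hmin]
  exact le_min h1 h2
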